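/- Let G be a finite group, let X be a subgroup of G that is self-normalizing (the normalizer of X in G equals X), and let x ∈ G. Then the number of G-conjugates gXg⁻¹ of X that contain x, multiplied by the size of the conjugacy class x^G of x, equals |x^G ∩ X| · [G : X]. (This is the counting identity n_i/[G : X] = |x^G ∩ X|/|x^G| used in the proof of the counting lemma.) -/

import Mathlib

lemma mem_map_conj_iff {G : Type*} [Group G] (X : Subgroup G) (a y : G) :
    y ∈ Subgroup.map (MulAut.conj a).toMonoidHom X ↔ a⁻¹ * y * a ∈ X := by
  simp only [Subgroup.mem_map, MulEquiv.coe_toMonoidHom, MulAut.conj_apply]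
  constructor
  · rintro ⟨h, hh, rfl⟩
    simpa [mul_assoc] using hh
  · intro h
    exact ⟨a⁻¹ * y * a, h, by group⟩

/-- Fiber-counting lemma: counting `g` with `g⁻¹xg ∈ Y` by the value `g⁻¹xg`. -/
lemma aux_card {G : Type*} [Group G] (x : G) (Y : Set G) :
    Nat.card {g : G // g⁻¹ * x * g ∈ Y}
      = Nat.card ↥({z : G | ∃ g : G, g⁻¹ * x * g = z} ∩ Y)
        * Nat.card {c : G // c * x = x * c} := by
  set S := {g : G // g⁻¹ * x * g ∈ Y} with hS
  set O := ↥({z : G | ∃ g : G, g⁻¹ * x * g = z} ∩ Y) with hO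
  set C := {c : G // c * x = x * c} with hC
  let φ : S → O := fun g => ⟨g.1⁻¹ * x * g.1, ⟨g.1, rfl⟩, g.2⟩
  have fibEquiv : ∀ y : O, {g : S // φ g = y} ≃ C := by
    intro y
    have hy1 : ∃ g : G, g⁻¹ * x * g = y.1 := y.2.1
    set a := hy1.choose with ha'
    have ha : a⁻¹ * x * a = y.1 := hy1.choose_spec
    refine ⟨fun g => ⟨g.1.1 * a⁻¹, ?_⟩, fun c => ⟨⟨c.1 * a, ?_⟩, ?_⟩, ?_, ?_⟩
    · -- (g * a⁻¹) * x = x * (g * a⁻¹)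
      have hg : g.1.1⁻¹ * x * g.1.1 = y.1 := congrArg Subtype.val g.2
      have key : g.1.1⁻¹ * x * g.1.1 = a⁻¹ * x * a := by rw [hg, ha]
      have := congrArg (fun t => g.1.1 * t * a⁻¹) key
      simpa [mul_assoc] using this.symm
    · -- (c*a)⁻¹ * x * (c*a) ∈ Y
      have hc : c.1⁻¹ * x * c.1 = x := by
        rw [mul_assoc, ← c.2]; group
      have : (c.1 * a)⁻¹ * x * (c.1 * a) = a⁻¹ * (c.1⁻¹ * x * c.1) * a := by group
      rw [this, hc, ha]
      exact y.2.2
    · -- φ ⟨c*a, _⟩ = y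
      apply Subtype.ext
      show (c.1 * a)⁻¹ * x * (c.1 * a) = y.1
      have hc : c.1⁻¹ * x * c.1 = x := by
        rw [mul_assoc, ← c.2]; group
      have : (c.1 * a)⁻¹ * x * (c.1 * a) = a⁻¹ * (c.1⁻¹ * x * c.1) * a := by group
      rw [this, hc, ha]
    · intro g
      apply Subtype.ext; apply Subtype.ext
      show g.1.1 * a⁻¹ * a = g.1.1
      group
    · intro c
      apply Subtype.ext
      show c.1 * a * a⁻¹ = c.1
      group
  have e : S ≃ O × C :=
    (Equiv.sigmaFiberEquiv φ).symm.trans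
      ((Equiv.sigmaCongrRight fibEquiv).trans (Equiv.sigmaEquivProd O C))
  rw [Nat.card_congr e, Nat.card_prod]

/-- Counting `g` with `g⁻¹xg ∈ X` by the conjugate subgroup `gXg⁻¹`. -/
lemma aux_card2 {G : Type*} [Group G] (X : Subgroup G) (hX : Subgroup.normalizer (X : Set G) = X) (x : G) :
    Nat.card {g : G // g⁻¹ * x * g ∈ (X : Set G)}
      = Nat.card {H : Subgroup G //
          (∃ g : G, H = Subgroup.map (MulAut.conj g).toMonoidHom X) ∧ x ∈ H}
        * Nat.card X := by
  set S := {g : G // g⁻¹ * x * g ∈ (X : Set G)} with hS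
  set T := {H : Subgroup G //
      (∃ g : G, H = Subgroup.map (MulAut.conj g).toMonoidHom X) ∧ x ∈ H} with hT
  have hXconj : ∀ h ∈ X, ∀ w : G, h⁻¹ * w * h ∈ X ↔ w ∈ X := by
    intro h hh w
    constructor
    · intro hw
      have : w = h * (h⁻¹ * w * h) * h⁻¹ := by group
      rw [this]
      exact X.mul_mem (X.mul_mem hh hw) (X.inv_mem hh)
    · intro hw
      exact X.mul_mem (X.mul_mem (X.inv_mem hh) hw) hh
  let ψ : S → T := fun g =>
    ⟨Subgroup.map (MulAut.conj g.1).toMonoidHom X, ⟨g.1, rfl⟩,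
      (mem_map_conj_iff X g.1 x).mpr g.2⟩
  have fibEquiv : ∀ H : T, {g : S // ψ g = H} ≃ X := by
    intro H
    have h1 : ∃ g : G, H.1 = Subgroup.map (MulAut.conj g).toMonoidHom X := H.2.1
    set a := h1.choose with ha'
    have ha : H.1 = Subgroup.map (MulAut.conj a).toMonoidHom X := h1.choose_spec
    have hax : a⁻¹ * x * a ∈ X := (mem_map_conj_iff X a x).mp (ha ▸ H.2.2)
    refine ⟨fun g => ⟨a⁻¹ * g.1.1, ?_⟩, fun h => ⟨⟨a * h.1, ?_⟩, ?_⟩, ?_, ?_⟩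
    · -- a⁻¹ * g ∈ X, using self-normalizing
      have hg : Subgroup.map (MulAut.conj g.1.1).toMonoidHom X
          = Subgroup.map (MulAut.conj a).toMonoidHom X := by
        rw [← ha]; exact congrArg Subtype.val g.2
      have hmem : ∀ y : G, g.1.1⁻¹ * y * g.1.1 ∈ X ↔ a⁻¹ * y * a ∈ X := by
        intro y
        rw [← mem_map_conj_iff, ← mem_map_conj_iff, hg]
      suffices hn : a⁻¹ * g.1.1 ∈ Subgroup.normalizer (X : Set G) by rwa [hX] at hn
      rw [Subgroup.mem_normalizer_iff]
      intro h
      constructor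
      · intro hh
        have h2 : g.1.1⁻¹ * (g.1.1 * h * g.1.1⁻¹) * g.1.1 ∈ X := by
          have : g.1.1⁻¹ * (g.1.1 * h * g.1.1⁻¹) * g.1.1 = h := by group
          rwa [this]
        have h3 : a⁻¹ * (g.1.1 * h * g.1.1⁻¹) * a ∈ X := (hmem _).mp h2
        have : a⁻¹ * (g.1.1 * h * g.1.1⁻¹) * a
            = a⁻¹ * g.1.1 * h * (a⁻¹ * g.1.1)⁻¹ := by group
        rwa [this] at h3
      · intro hh
        have h3 : a⁻¹ * (g.1.1 * h * g.1.1⁻¹) * a ∈ X := by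
          have : a⁻¹ * (g.1.1 * h * g.1.1⁻¹) * a
              = a⁻¹ * g.1.1 * h * (a⁻¹ * g.1.1)⁻¹ := by group
          rwa [this]
        have h2 : g.1.1⁻¹ * (g.1.1 * h * g.1.1⁻¹) * g.1.1 ∈ X := (hmem _).mpr h3
        have : g.1.1⁻¹ * (g.1.1 * h * g.1.1⁻¹) * g.1.1 = h := by group
        rwa [this] at h2
    · -- a * h ∈ S
      show (a * h.1)⁻¹ * x * (a * h.1) ∈ (X : Set G)
      have : (a * h.1)⁻¹ * x * (a * h.1) = h.1⁻¹ * (a⁻¹ * x * a) * h.1 := by group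
      rw [this]
      exact (hXconj h.1 h.2 _).mpr hax
    · -- ψ ⟨a * h, _⟩ = H
      apply Subtype.ext
      show Subgroup.map (MulAut.conj (a * h.1)).toMonoidHom X = H.1
      rw [ha]
      ext y
      rw [mem_map_conj_iff, mem_map_conj_iff]
      have : (a * h.1)⁻¹ * y * (a * h.1) = h.1⁻¹ * (a⁻¹ * y * a) * h.1 := by group
      rw [this]
      exact hXconj h.1 h.2 _
    · intro g
      apply Subtype.ext; apply Subtype.ext
      show a * (a⁻¹ * g.1.1) = g.1.1
      group
    · intro h
      apply Subtype.ext
      show a⁻¹ * (a * h.1) = h.1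
      group
  have e : S ≃ T × X :=
    (Equiv.sigmaFiberEquiv ψ).symm.trans
      ((Equiv.sigmaCongrRight fibEquiv).trans (Equiv.sigmaEquivProd T X))
  rw [Nat.card_congr e, Nat.card_prod]

/-- **Counting identity** used in the proof of the counting lemma: if `X` is a
self-normalizing subgroup of the finite group `G`, then the number of conjugates of
`X` containing `x`, times `|x^G|`, equals `|x^G ∩ X| ⬝ [G : X]`. -/
theorem card_conjugates_containing_mul_card_conjClass
    (G : Type*) [Group G] [Finite G] (X : Subgroup G) (hX : Subgroup.normalizer (X : Set G) = X) (x : G) :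
    Nat.card {H : Subgroup G //
        (∃ g : G, H = Subgroup.map (MulAut.conj g).toMonoidHom X) ∧ x ∈ H}
      * Nat.card ({z : G | ∃ g : G, g⁻¹ * x * g = z})
    = Nat.card ↥({z : G | ∃ g : G, g⁻¹ * x * g = z} ∩ (X : Set G)) * X.index := by
  set A := Nat.card {H : Subgroup G //
      (∃ g : G, H = Subgroup.map (MulAut.conj g).toMonoidHom X) ∧ x ∈ H} with hA
  set B := Nat.card ({z : G | ∃ g : G, g⁻¹ * x * g = z}) with hB
  set D := Nat.card ↥({z : G | ∃ g : G, g⁻¹ * x * g = z} ∩ (X : Set G)) with hD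
  set k := Nat.card X with hk
  set c := Nat.card {c : G // c * x = x * c} with hc
  set n := X.index with hn
  have h1 : Nat.card {g : G // g⁻¹ * x * g ∈ (X : Set G)} = D * c := aux_card x _
  have h2 : Nat.card {g : G // g⁻¹ * x * g ∈ (X : Set G)} = A * k := aux_card2 X hX x
  have hG : Nat.card G = B * c := by
    have h3 := aux_card x (Set.univ : Set G)
    rwa [Nat.card_congr (Equiv.subtypeUnivEquiv fun g => Set.mem_univ _),
      Nat.card_congr (Equiv.setCongr (Set.inter_univ _))] at h3
  have h4 : k * n = Nat.card G := X.card_mul_index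
  haveI : Nonempty X := ⟨1, X.one_mem⟩
  haveI : Nonempty {c : G // c * x = x * c} := ⟨1, by group⟩
  have hkc : 0 < k * c := Nat.mul_pos Nat.card_pos Nat.card_pos
  refine Nat.eq_of_mul_eq_mul_right hkc ?_
  calc A * B * (k * c) = (A * k) * (B * c) := by ring
    _ = Nat.card {g : G // g⁻¹ * x * g ∈ (X : Set G)} * Nat.card G := by rw [← h2, ← hG]
    _ = (D * c) * (k * n) := by rw [h1, h4]
    _ = D * n * (k * c) := by ring
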